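/- Let n ≥ 1 and let H be the n×n Hansen matrix, the symmetric tridiagonal matrix with H_{1,1} = 1, H_{i,i} = 2 for 2 ≤ i ≤ n, H_{i,i−1} = H_{i−1,i} = −1 for 2 ≤ i ≤ n, and all other entries zero. Write its characteristic polynomial as det(λI − H) = λⁿ + c₁λ^{n−1} + ⋯ + c_{n−1}λ + cₙ. Then for 1 ≤ k ≤ n, c_{n−k+1} = (−1)^{n−k+1} · binomial(n+k−1, n−k+1); equivalently, cⱼ = (−1)ʲ · binomial(2n−j, j) for 1 ≤ j ≤ n. -/

import Mathlib

open Polynomial Matrix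

/-- Hansen's matrix. -/
def hansen (n : ℕ) : Matrix (Fin n) (Fin n) ℝ := fun i j =>
  if i.val = j.val then (if i.val = 0 then 1 else 2)
  else if i.val + 1 = j.val ∨ j.val + 1 = i.val then -1 else 0

/-- The family of characteristic polynomials, by the tridiagonal recurrence. -/
noncomputable def hP : ℕ → Polynomial ℝ
  | 0 => 1
  | 1 => Polynomial.X - 1
  | (n+2) => (Polynomial.X - 2) * hP (n+1) - hP n

lemma chooseId (a b : ℕ) :
    (a+2).choose (b+2) + a.choose b = a.choose (b+2) + 2 * (a+1).choose (b+1) := by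
  have h1 : (a+2).choose (b+2) = (a+1).choose (b+1) + (a+1).choose (b+2) :=
    Nat.choose_succ_succ _ _
  have h2 : (a+1).choose (b+1) = a.choose b + a.choose (b+1) := Nat.choose_succ_succ _ _
  have h3 : (a+1).choose (b+2) = a.choose (b+1) + a.choose (b+2) := Nat.choose_succ_succ _ _
  omega

lemma coeff_hP : ∀ n m : ℕ, (hP n).coeff m
    = if m ≤ n then (-1 : ℝ) ^ (n - m) * ((n + m).choose (n - m) : ℝ) else 0 := by
  intro n
  induction n using Nat.strong_induction_on with
  | _ n ih =>
    match n with
    | 0 =>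
      intro m
      rcases Nat.eq_zero_or_pos m with h | h
      · subst h; simp [hP]
      · rw [if_neg (by omega)]
        simp [hP, Polynomial.coeff_one, Nat.pos_iff_ne_zero.mp h]
    | 1 =>
      intro m
      match m with
      | 0 => simp [hP]
      | 1 => simp [hP, Polynomial.coeff_one]
      | (m+2) =>
        rw [if_neg (by omega)]
        show ((Polynomial.X : ℝ[X]) - 1).coeff (m+2) = 0
        rw [Polynomial.coeff_sub, Polynomial.coeff_X, Polynomial.coeff_one]
        norm_num
    | (n+2) =>
      intro m
      have hQ := ih (n+1) (by omega)
      have hR := ih n (by omega)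
      have expand : ∀ m : ℕ, (hP (n+2)).coeff m
          = (Polynomial.X * hP (n+1)).coeff m - 2 * (hP (n+1)).coeff m - (hP n).coeff m := by
        intro m
        show ((Polynomial.X - 2) * hP (n+1) - hP n).coeff m = _
        have hc : ((Polynomial.X : ℝ[X]) - 2) * hP (n+1)
            = Polynomial.X * hP (n+1) - Polynomial.C 2 * hP (n+1) := by
          have : (Polynomial.C (2:ℝ)) = 2 := map_ofNat _ 2
          rw [this]; ring
        rw [hc, Polynomial.coeff_sub, Polynomial.coeff_sub, Polynomial.coeff_C_mul]
      match m with
      | 0 =>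
        rw [expand 0, Polynomial.coeff_X_mul_zero, hQ 0, hR 0]
        rw [if_pos (by omega), if_pos (by omega), if_pos (by omega)]
        simp only [Nat.sub_zero, Nat.add_zero, Nat.choose_self]
        rw [pow_succ, pow_succ]
        ring
      | (m+1) =>
        rw [expand (m+1), Polynomial.coeff_X_mul, hQ m, hQ (m+1), hR (m+1)]
        rcases lt_or_ge m n with hmn | hmn
        · -- m+1 ≤ n : main case
          obtain ⟨b, hb⟩ : ∃ b, n = m + 1 + b := ⟨n - (m+1), by omega⟩
          subst hb
          rw [if_pos (by omega), if_pos (by omega), if_pos (by omega), if_pos (by omega)]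
          have e1 : m + 1 + b + 2 - (m + 1) = b + 2 := by omega
          have e2 : m + 1 + b + 1 - m = b + 2 := by omega
          have e3 : m + 1 + b + 1 - (m + 1) = b + 1 := by omega
          have e4 : m + 1 + b - (m + 1) = b := by omega
          rw [e1, e2, e3, e4]
          have e5 : m + 1 + b + 2 + (m + 1) = (2*m + b + 2) + 2 := by omega
          have e6 : m + 1 + b + 1 + m = 2*m + b + 2 := by omega
          have e7 : m + 1 + b + 1 + (m + 1) = (2*m + b + 2) + 1 := by omega
          have e8 : m + 1 + b + (m + 1) = 2*m + b + 2 := by omega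
          rw [e5, e6, e7, e8]
          set a := 2*m + b + 2 with ha
          have key : ((a+2).choose (b+2) : ℝ) + a.choose b
              = a.choose (b+2) + 2 * (a+1).choose (b+1) := by
            exact_mod_cast congrArg (Nat.cast : ℕ → ℝ) (chooseId a b)
          simp only [pow_succ]
          linear_combination (-((-1:ℝ))^b) * key
        · rcases Nat.lt_or_ge m (n+1) with h1 | h1
          · -- m = n
            have hm : m = n := by omega
            subst hm
            rw [if_pos (by omega), if_pos (by omega), if_neg (by omega), if_pos (by omega)]
            have e1 : m + 1 - m = 1 := by omega
            have e2 : m + 1 - (m+1) = 0 := by omega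
            have e3 : m + 2 - (m+1) = 1 := by omega
            rw [e1, e2, e3]
            simp only [Nat.choose_one_right, Nat.choose_zero_right]
            push_cast
            ring
          · rcases Nat.lt_or_ge m (n+2) with h2 | h2
            · -- m = n+1
              have hm : m = n + 1 := by omega
              subst hm
              rw [if_pos (by omega), if_neg (by omega), if_neg (by omega), if_pos (by omega)]
              have e1 : n + 1 - (n+1) = 0 := by omega
              have e2 : n + 2 - (n+2) = 0 := by omega
              rw [e1, e2]
              simp
            · rw [if_neg (by omega), if_neg (by omega), if_neg (by omega), if_neg (by omega)]
              ring

lemma hansen_castSucc (n : ℕ) (i j : Fin n) :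
    hansen (n+1) i.castSucc j.castSucc = hansen n i j := by
  simp [hansen]

lemma charmatrix_hansen_castSucc (n : ℕ) :
    (charmatrix (hansen (n+1))).submatrix Fin.castSucc Fin.castSucc
      = charmatrix (hansen n) := by
  ext i j
  rw [Matrix.submatrix_apply]
  by_cases h : i = j
  · subst h
    rw [charmatrix_apply_eq, charmatrix_apply_eq, hansen_castSucc]
  · rw [charmatrix_apply_ne _ _ _ (fun he => h (Fin.castSucc_injective _ he)),
      charmatrix_apply_ne _ _ _ h, hansen_castSucc]

lemma charmatrix_hansen_last (n : ℕ) :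
    charmatrix (hansen (n+2)) (Fin.last (n+1)) (Fin.last (n+1))
      = Polynomial.X - 2 := by
  rw [charmatrix_apply_eq]
  have h : hansen (n+2) (Fin.last (n+1)) (Fin.last (n+1)) = 2 := by
    simp [hansen, Fin.last]
  rw [h, map_ofNat]

lemma charpoly_rec (n : ℕ) :
    (hansen (n+2)).charpoly
      = (Polynomial.X - 2) * (hansen (n+1)).charpoly - (hansen n).charpoly := by
  set A := charmatrix (hansen (n+2)) with hA
  show A.det = _
  rw [Matrix.det_succ_row A (Fin.last (n+1)), Fin.sum_univ_castSucc, Fin.sum_univ_castSucc]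
  have hz : ∀ i : Fin n, A (Fin.last (n+1)) i.castSucc.castSucc = 0 := by
    intro i
    rw [hA, charmatrix_apply_ne _ _ _ (by
      intro he
      have := congrArg Fin.val he
      simp [Fin.last] at this
      omega)]
    have h0 : hansen (n+2) (Fin.last (n+1)) i.castSucc.castSucc = 0 := by
      have hi := i.isLt
      simp only [hansen, Fin.val_last, Fin.coe_castSucc]
      rw [if_neg (by omega), if_neg (by omega)]
    rw [h0, map_zero, neg_zero]
  simp only [hz, mul_zero, zero_mul, Finset.sum_const_zero, zero_add]
  -- the two surviving terms
  have hAll : A (Fin.last (n+1)) (Fin.last (n+1)) = Polynomial.X - 2 :=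
    charmatrix_hansen_last n
  have hAln : A (Fin.last (n+1)) ((Fin.last n).castSucc) = 1 := by
    rw [hA, charmatrix_apply_ne _ _ _ (by
      intro he
      have := congrArg Fin.val he
      simp [Fin.last] at this)]
    have h1 : hansen (n+2) (Fin.last (n+1)) ((Fin.last n).castSucc) = -1 := by
      simp only [hansen, Fin.val_last, Fin.coe_castSucc]
      rw [if_neg (show ¬ (n + 1 = n) by omega)]
      simp
    rw [h1, map_neg, neg_neg, Polynomial.C_1]
  have hminor1 : (A.submatrix (Fin.last (n+1)).succAbove (Fin.last (n+1)).succAbove).det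
      = (hansen (n+1)).charpoly := by
    rw [Fin.succAbove_last, hA, charmatrix_hansen_castSucc]
    rfl
  set B := A.submatrix (Fin.last (n+1)).succAbove ((Fin.last n).castSucc).succAbove with hB
  have hcol : ∀ i : Fin (n+1), B i (Fin.last n) = A i.castSucc (Fin.last (n+1)) := by
    intro i
    rw [hB, Matrix.submatrix_apply, Fin.succAbove_last,
      Fin.succAbove_of_le_castSucc _ _ (le_refl _), Fin.succ_last]
  have hdetB : B.det = (hansen n).charpoly := by
    rw [Matrix.det_succ_column B (Fin.last n), Fin.sum_univ_castSucc]
    have hz2 : ∀ i : Fin n, B i.castSucc (Fin.last n) = 0 := by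
      intro i
      rw [hcol, hA, charmatrix_apply_ne _ _ _ (by
        intro he
        have := congrArg Fin.val he
        have hi := i.isLt
        simp [Fin.last] at this
        omega)]
      have h0 : hansen (n+2) i.castSucc.castSucc (Fin.last (n+1)) = 0 := by
        have hi := i.isLt
        simp only [hansen, Fin.val_last, Fin.coe_castSucc]
        rw [if_neg (by omega), if_neg (by omega)]
      rw [h0, map_zero, neg_zero]
    simp only [hz2, mul_zero, zero_mul, Finset.sum_const_zero, zero_add]
    have hBll : B (Fin.last n) (Fin.last n) = 1 := by
      rw [hcol, hA, charmatrix_apply_ne _ _ _ (by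
        intro he
        have := congrArg Fin.val he
        simp [Fin.last] at this)]
      have h1 : hansen (n+2) ((Fin.last n).castSucc) (Fin.last (n+1)) = -1 := by
        simp only [hansen, Fin.val_last, Fin.coe_castSucc]
        rw [if_neg (show ¬ (n = n + 1) by omega)]
        simp
      rw [h1, map_neg, neg_neg, Polynomial.C_1]
    have hminor0 : (B.submatrix (Fin.last n).succAbove (Fin.last n).succAbove).det
        = (hansen n).charpoly := by
      have hfun : B.submatrix (Fin.last n).succAbove (Fin.last n).succAbove
          = (charmatrix (hansen (n+1))).submatrix Fin.castSucc Fin.castSucc := by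
        refine funext fun i => funext fun j => ?_
        rw [Fin.succAbove_last, hB, Matrix.submatrix_apply, Matrix.submatrix_apply,
          Matrix.submatrix_apply, Fin.succAbove_last,
          Fin.succAbove_of_castSucc_lt _ _ (by
            simp only [Fin.lt_def, Fin.coe_castSucc, Fin.val_last]
            exact j.isLt)]
        rw [hA]
        exact congrFun (congrFun (charmatrix_hansen_castSucc (n+1)) i.castSucc) j.castSucc
      rw [hfun, charmatrix_hansen_castSucc]
      rfl
    rw [hBll, hminor0, Fin.val_last]
    have hsgn : ((-1 : Polynomial ℝ)) ^ (n + n) = 1 := by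
      rw [← two_mul, pow_mul]; norm_num
    rw [hsgn]; ring
  rw [hAll, hAln, hminor1, hdetB, Fin.val_last, Fin.coe_castSucc, Fin.val_last]
  have hsgn1 : ((-1 : Polynomial ℝ)) ^ (n + 1 + n) = -1 := by
    rw [show n + 1 + n = 2*n + 1 by ring, pow_succ, pow_mul]; norm_num
  have hsgn2 : ((-1 : Polynomial ℝ)) ^ (n + 1 + (n + 1)) = 1 := by
    rw [← two_mul, pow_mul]; norm_num
  rw [hsgn1, hsgn2]
  ring

lemma charpoly_hansen : ∀ n, (hansen n).charpoly = hP n := by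
  intro n
  induction n using Nat.strong_induction_on with
  | _ n ih =>
    match n with
    | 0 =>
      show (charmatrix (hansen 0)).det = hP 0
      rw [Matrix.det_fin_zero]
      simp [hP]
    | 1 =>
      show (charmatrix (hansen 1)).det = hP 1
      rw [Matrix.det_fin_one, charmatrix_apply_eq]
      have : hansen 1 0 0 = 1 := by simp [hansen]
      rw [this, Polynomial.C_1]
      simp [hP]
    | (n+2) =>
      rw [charpoly_rec, ih (n+1) (by omega), ih n (by omega)]
      simp [hP]

/-- § 7.2 of the paper: the coefficients of the characteristic polynomial
`λⁿ + c₁λ^{n−1} + ⋯ + cₙ` of Hansen's matrix satisfy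
`c_{n−k+1} = (−1)^{n−k+1} C(n+k−1, n−k+1)` for `1 ≤ k ≤ n`; equivalently
`cⱼ = (−1)ʲ C(2n−j, j)` for `1 ≤ j ≤ n`. -/
theorem stmt_16 (n : ℕ) (hn : 1 ≤ n) (H : Matrix (Fin n) (Fin n) ℝ)
    (h11 : H ⟨0, by omega⟩ ⟨0, by omega⟩ = 1)
    (hdiag : ∀ i : Fin n, 1 ≤ i.val → H i i = 2)
    (hsub : ∀ i j : Fin n, i.val + 1 = j.val → H i j = -1 ∧ H j i = -1)
    (hzero : ∀ i j : Fin n, i.val + 2 ≤ j.val ∨ j.val + 2 ≤ i.val → H i j = 0) :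
    (∀ k, 1 ≤ k → k ≤ n →
      H.charpoly.coeff (k - 1)
        = (-1 : ℝ) ^ (n - k + 1) * ((n + k - 1).choose (n - k + 1) : ℝ)) ∧
    (∀ j, 1 ≤ j → j ≤ n →
      H.charpoly.coeff (n - j) = (-1 : ℝ) ^ j * ((2 * n - j).choose j : ℝ)) := by
  have hH : H = hansen n := by
    funext i j
    by_cases hij : i.val = j.val
    · have hijf : i = j := Fin.ext hij
      subst hijf
      by_cases h0 : i.val = 0
      · have : i = ⟨0, by omega⟩ := Fin.ext h0
        rw [this, h11]
        simp [hansen]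
      · rw [hdiag i (by omega)]
        simp only [hansen, if_true, eq_self_iff_true]
        rw [if_neg h0]
    · rcases Nat.lt_or_ge i.val j.val with h | h
      · rcases Nat.lt_or_ge (i.val + 1) j.val with h2 | h2
        · rw [hzero i j (Or.inl (by omega))]
          simp only [hansen]
          rw [if_neg hij, if_neg (show ¬(i.val + 1 = j.val ∨ j.val + 1 = i.val) by omega)]
        · have he : i.val + 1 = j.val := by omega
          rw [(hsub i j he).1]
          simp only [hansen]
          rw [if_neg hij, if_pos (Or.inl he)]
      · rcases Nat.lt_or_ge (j.val + 1) i.val with h2 | h2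
        · rw [hzero i j (Or.inr (by omega))]
          simp only [hansen]
          rw [if_neg hij, if_neg (show ¬(i.val + 1 = j.val ∨ j.val + 1 = i.val) by omega)]
        · have he : j.val + 1 = i.val := by omega
          rw [(hsub j i he).2]
          simp only [hansen]
          rw [if_neg hij, if_pos (Or.inr he)]
  subst hH
  have hc : ∀ m, (hansen n).charpoly.coeff m
      = if m ≤ n then (-1 : ℝ) ^ (n - m) * ((n + m).choose (n - m) : ℝ) else 0 := by
    intro m
    rw [charpoly_hansen n]
    exact coeff_hP n m
  constructor
  · intro k hk1 hkn
    rw [hc (k-1), if_pos (by omega)]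
    have e1 : n - (k-1) = n - k + 1 := by omega
    have e2 : n + (k-1) = n + k - 1 := by omega
    rw [e1, e2]
  · intro j hj1 hjn
    rw [hc (n-j), if_pos (by omega)]
    have e1 : n - (n-j) = j := by omega
    have e2 : n + (n-j) = 2*n - j := by omega
    rw [e1, e2]
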